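/- Suppose {1, μ, ν} and {1, μ', ν'} are each linearly independent over ℚ, and ℤ + 2μℤ + 2νℤ = r(ℤ + 2μ'ℤ + 2ν'ℤ) for some positive real r. Then there exists A ∈ GL₃(ℤ) carrying (μ, ν) to (μ', ν') under the fractional linear action 2μ' = (2aμ+2bν+c)/(2gμ+2hν+i), 2ν' = (2dμ+2eν+f)/(2gμ+2hν+i). -/

import Mathlib

lemma clos_mem (μ ν x : ℝ) :
    x ∈ (AddSubgroup.closure {1, 2*μ, 2*ν} : AddSubgroup ℝ) ↔
      ∃ a b c : ℤ, x = 2*a*μ + 2*b*ν + c := by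
  constructor
  · intro hx
    induction hx using AddSubgroup.closure_induction with
    | mem y hy =>
      rcases hy with rfl | rfl | rfl
      · exact ⟨0, 0, 1, by push_cast; ring⟩
      · exact ⟨1, 0, 0, by push_cast; ring⟩
      · exact ⟨0, 1, 0, by push_cast; ring⟩
    | zero => exact ⟨0, 0, 0, by push_cast; ring⟩
    | add u v hu hv ihu ihv =>
      obtain ⟨a, b, c, rfl⟩ := ihu
      obtain ⟨a', b', c', rfl⟩ := ihv
      exact ⟨a + a', b + b', c + c', by push_cast; ring⟩
    | neg u hu ihu =>
      obtain ⟨a, b, c, rfl⟩ := ihu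
      exact ⟨-a, -b, -c, by push_cast; ring⟩
  · rintro ⟨a, b, c, rfl⟩
    have h1 : (1 : ℝ) ∈ AddSubgroup.closure {1, 2*μ, 2*ν} :=
      AddSubgroup.subset_closure (by simp)
    have h2 : (2*μ : ℝ) ∈ AddSubgroup.closure {1, 2*μ, 2*ν} :=
      AddSubgroup.subset_closure (by simp)
    have h3 : (2*ν : ℝ) ∈ AddSubgroup.closure {1, 2*μ, 2*ν} :=
      AddSubgroup.subset_closure (by simp)
    have := AddSubgroup.add_mem _ (AddSubgroup.add_mem _
      (AddSubgroup.zsmul_mem _ h2 a) (AddSubgroup.zsmul_mem _ h3 b))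
      (AddSubgroup.zsmul_mem _ h1 c)
    convert this using 1
    push_cast [zsmul_eq_mul]
    ring

lemma indep3 {μ ν : ℝ} (hli : LinearIndependent ℚ ![(1:ℝ), μ, ν])
    (a b c : ℤ) (h : 2*(a:ℝ)*μ + 2*(b:ℝ)*ν + (c:ℝ) = 0) :
    a = 0 ∧ b = 0 ∧ c = 0 := by
  have key := Fintype.linearIndependent_iff.mp hli ![(c:ℚ), 2*a, 2*b] ?_
  · have h0 := key 0
    have h1 := key 1
    have h2 := key 2
    simp [Matrix.cons_val_zero, Matrix.cons_val_one] at h0 h1 h2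
    refine ⟨by exact_mod_cast h1, by exact_mod_cast h2, by exact_mod_cast h0⟩
  · simp only [Fin.sum_univ_three, Matrix.cons_val_zero, Matrix.cons_val_one, Matrix.head_cons,
      Matrix.cons_val_two, Matrix.tail_cons]
    rw [Rat.smul_def, Rat.smul_def, Rat.smul_def]
    push_cast
    linear_combination h


theorem stmt13 (μ ν μ' ν' r : ℝ) (hr : 0 < r)
    (hli : LinearIndependent ℚ ![(1 : ℝ), μ, ν])
    (hli' : LinearIndependent ℚ ![(1 : ℝ), μ', ν'])
    (heq : (AddSubgroup.closure {1, 2*μ, 2*ν} : Set ℝ) =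
      (fun x => r * x) '' (AddSubgroup.closure {1, 2*μ', 2*ν'} : Set ℝ)) :
    ∃ A : GL (Fin 3) ℤ,
      2 * ((A : Matrix (Fin 3) (Fin 3) ℤ) 2 0 : ℝ) * μ + 2 * ((A : Matrix (Fin 3) (Fin 3) ℤ) 2 1 : ℝ) * ν +
        ((A : Matrix (Fin 3) (Fin 3) ℤ) 2 2 : ℝ) ≠ 0 ∧
      2 * μ' = (2 * ((A : Matrix (Fin 3) (Fin 3) ℤ) 0 0 : ℝ) * μ + 2 * ((A : Matrix (Fin 3) (Fin 3) ℤ) 0 1 : ℝ) * ν +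
          ((A : Matrix (Fin 3) (Fin 3) ℤ) 0 2 : ℝ)) /
        (2 * ((A : Matrix (Fin 3) (Fin 3) ℤ) 2 0 : ℝ) * μ + 2 * ((A : Matrix (Fin 3) (Fin 3) ℤ) 2 1 : ℝ) * ν +
          ((A : Matrix (Fin 3) (Fin 3) ℤ) 2 2 : ℝ)) ∧
      2 * ν' = (2 * ((A : Matrix (Fin 3) (Fin 3) ℤ) 1 0 : ℝ) * μ + 2 * ((A : Matrix (Fin 3) (Fin 3) ℤ) 1 1 : ℝ) * ν +
          ((A : Matrix (Fin 3) (Fin 3) ℤ) 1 2 : ℝ)) /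
        (2 * ((A : Matrix (Fin 3) (Fin 3) ℤ) 2 0 : ℝ) * μ + 2 * ((A : Matrix (Fin 3) (Fin 3) ℤ) 2 1 : ℝ) * ν +
          ((A : Matrix (Fin 3) (Fin 3) ℤ) 2 2 : ℝ)) := by
  -- E equations
  have hmem1 : (1 : ℝ) ∈ (AddSubgroup.closure {1, 2*μ', 2*ν'} : AddSubgroup ℝ) :=
    AddSubgroup.subset_closure (by simp)
  have hmem2 : (2*μ' : ℝ) ∈ (AddSubgroup.closure {1, 2*μ', 2*ν'} : AddSubgroup ℝ) :=
    AddSubgroup.subset_closure (by simp)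
  have hmem3 : (2*ν' : ℝ) ∈ (AddSubgroup.closure {1, 2*μ', 2*ν'} : AddSubgroup ℝ) :=
    AddSubgroup.subset_closure (by simp)
  have hE1' : r * (2*μ') ∈ (AddSubgroup.closure {1, 2*μ, 2*ν} : Set ℝ) := by
    rw [heq]; exact ⟨2*μ', hmem2, rfl⟩
  have hE2' : r * (2*ν') ∈ (AddSubgroup.closure {1, 2*μ, 2*ν} : Set ℝ) := by
    rw [heq]; exact ⟨2*ν', hmem3, rfl⟩
  have hE3' : r ∈ (AddSubgroup.closure {1, 2*μ, 2*ν} : Set ℝ) := by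
    rw [heq]; exact ⟨1, hmem1, by simp⟩
  obtain ⟨a, b, c, hE1⟩ := (clos_mem μ ν _).mp hE1'
  obtain ⟨d, e, f, hE2⟩ := (clos_mem μ ν _).mp hE2'
  obtain ⟨g, h, k, hE3⟩ := (clos_mem μ ν _).mp hE3'
  -- F equations
  have hF1' : (2*μ : ℝ) ∈ ((fun x => r * x) '' (AddSubgroup.closure {1, 2*μ', 2*ν'} : Set ℝ)) := by
    rw [← heq]; exact AddSubgroup.subset_closure (by simp)
  have hF2' : (2*ν : ℝ) ∈ ((fun x => r * x) '' (AddSubgroup.closure {1, 2*μ', 2*ν'} : Set ℝ)) := by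
    rw [← heq]; exact AddSubgroup.subset_closure (by simp)
  have hF3' : (1 : ℝ) ∈ ((fun x => r * x) '' (AddSubgroup.closure {1, 2*μ', 2*ν'} : Set ℝ)) := by
    rw [← heq]; exact AddSubgroup.subset_closure (by simp)
  obtain ⟨y1, hy1, hF1⟩ := hF1'
  obtain ⟨a', b', c', rfl⟩ := (clos_mem μ' ν' _).mp hy1
  obtain ⟨y2, hy2, hF2⟩ := hF2'
  obtain ⟨d', e', f', rfl⟩ := (clos_mem μ' ν' _).mp hy2
  obtain ⟨y3, hy3, hF3⟩ := hF3'
  obtain ⟨g', h', k', rfl⟩ := (clos_mem μ' ν' _).mp hy3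
  simp only at hF1 hF2 hF3
  -- nine integer equations
  have q1 := indep3 hli (a'*a + b'*d + c'*g - 1) (a'*b + b'*e + c'*h) (a'*c + b'*f + c'*k)
    (by push_cast; linear_combination hF1 - (a':ℝ)*hE1 - (b':ℝ)*hE2 - (c':ℝ)*hE3)
  have q2 := indep3 hli (d'*a + e'*d + f'*g) (d'*b + e'*e + f'*h - 1) (d'*c + e'*f + f'*k)
    (by push_cast; linear_combination hF2 - (d':ℝ)*hE1 - (e':ℝ)*hE2 - (f':ℝ)*hE3)
  have q3 := indep3 hli (g'*a + h'*d + k'*g) (g'*b + h'*e + k'*h) (g'*c + h'*f + k'*k - 1)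
    (by push_cast; linear_combination hF3 - (g':ℝ)*hE1 - (h':ℝ)*hE2 - (k':ℝ)*hE3)
  obtain ⟨q11, q12, q13⟩ := q1
  obtain ⟨q21, q22, q23⟩ := q2
  obtain ⟨q31, q32, q33⟩ := q3
  set A : Matrix (Fin 3) (Fin 3) ℤ := !![a, b, c; d, e, f; g, h, k] with hA
  set B : Matrix (Fin 3) (Fin 3) ℤ := !![a', b', c'; d', e', f'; g', h', k'] with hB
  have hBA : B * A = 1 := by
    ext i j
    fin_cases i <;> fin_cases j <;>
      simp [hA, hB, Matrix.mul_apply, Fin.sum_univ_three, Matrix.one_apply] <;> linarith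
  have hAB : A * B = 1 := mul_eq_one_comm.mp hBA
  refine ⟨⟨A, B, hAB, hBA⟩, ?_, ?_, ?_⟩
  all_goals
    have h00 : ((⟨A, B, hAB, hBA⟩ : GL (Fin 3) ℤ) : Matrix (Fin 3) (Fin 3) ℤ) 0 0 = a := rfl
    have h01 : ((⟨A, B, hAB, hBA⟩ : GL (Fin 3) ℤ) : Matrix (Fin 3) (Fin 3) ℤ) 0 1 = b := rfl
    have h02 : ((⟨A, B, hAB, hBA⟩ : GL (Fin 3) ℤ) : Matrix (Fin 3) (Fin 3) ℤ) 0 2 = c := rfl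
    have h10 : ((⟨A, B, hAB, hBA⟩ : GL (Fin 3) ℤ) : Matrix (Fin 3) (Fin 3) ℤ) 1 0 = d := rfl
    have h11 : ((⟨A, B, hAB, hBA⟩ : GL (Fin 3) ℤ) : Matrix (Fin 3) (Fin 3) ℤ) 1 1 = e := rfl
    have h12 : ((⟨A, B, hAB, hBA⟩ : GL (Fin 3) ℤ) : Matrix (Fin 3) (Fin 3) ℤ) 1 2 = f := rfl
    have h20 : ((⟨A, B, hAB, hBA⟩ : GL (Fin 3) ℤ) : Matrix (Fin 3) (Fin 3) ℤ) 2 0 = g := rfl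
    have h21 : ((⟨A, B, hAB, hBA⟩ : GL (Fin 3) ℤ) : Matrix (Fin 3) (Fin 3) ℤ) 2 1 = h := rfl
    have h22 : ((⟨A, B, hAB, hBA⟩ : GL (Fin 3) ℤ) : Matrix (Fin 3) (Fin 3) ℤ) 2 2 = k := rfl
    have e00 : A 0 0 = a := rfl
    have e01 : A 0 1 = b := rfl
    have e02 : A 0 2 = c := rfl
    have e10 : A 1 0 = d := rfl
    have e11 : A 1 1 = e := rfl
    have e12 : A 1 2 = f := rfl
    have e20 : A 2 0 = g := rfl
    have e21 : A 2 1 = h := rfl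
    have e22 : A 2 2 = k := rfl
    simp only [h00, h01, h02, h10, h11, h12, h20, h21, h22,
      e00, e01, e02, e10, e11, e12, e20, e21, e22]
  · rw [← hE3]; exact hr.ne'
  · rw [← hE3, ← hE1]
    field_simp
  · rw [← hE3, ← hE2]
    field_simp
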